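/- In λ⟨catch⟩, for every type σ: (1) ⟦σ⟧ ⊆ SN; and (2) for every term variable x and every finite sequence of strongly normalizing terms u₁,…,uₙ, the applied term x u₁ ⋯ uₙ is in ⟦σ⟧. -/
import Mathlib


/-! Formalization of the λ⟨catch⟩ calculus (de Bruijn indices for both term
variables and continuation variables). -/

/-- Types: unit, lists, arrows. -/
inductive Ty : Type
  | unit : Ty
  | list : Ty → Ty
  | arrow : Ty → Ty → Ty
  deriving DecidableEq

/-- A type is arrow-free if the arrow constructor does not occur in it. -/
def Ty.ArrowFree : Ty → Prop
  | .unit => True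
  | .list σ => σ.ArrowFree
  | .arrow _ _ => False

/-- Terms of λ⟨catch⟩. Term variables and continuation variables are both
de Bruijn indices (`lam` binds a term variable, `catch` binds a continuation
variable). -/
inductive Tm : Type
  | var : ℕ → Tm
  | unit : Tm
  | nil : Tm
  | cons : Tm
  | lrec : Tm
  | lam : Tm → Tm
  | app : Tm → Tm → Tm
  | catch : Tm → Tm
  | throw : ℕ → Tm → Tm
  deriving DecidableEq

/-- Values of λ⟨catch⟩. -/
inductive IsValue : Tm → Prop
  | var (x) : IsValue (.var x)
  | unit : IsValue .unit
  | nil : IsValue .nil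
  | cons : IsValue .cons
  | cons1 {v} : IsValue v → IsValue (.app .cons v)
  | cons2 {v w} : IsValue v → IsValue w → IsValue (.app (.app .cons v) w)
  | lrec : IsValue .lrec
  | lrec1 {v} : IsValue v → IsValue (.app .lrec v)
  | lrec2 {v w} : IsValue v → IsValue w → IsValue (.app (.app .lrec v) w)
  | lam (t) : IsValue (.lam t)

/-- Boolean version of `IsValue`. -/
def isVal : Tm → Bool
  | .var _ => true
  | .unit => true
  | .nil => true
  | .cons => true
  | .lrec => true
  | .lam _ => true
  | .app .cons v => isVal v
  | .app .lrec v => isVal v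
  | .app (.app .cons v) w => isVal v && isVal w
  | .app (.app .lrec v) w => isVal v && isVal w
  | _ => false

/-- The set of free continuation variables of a term. -/
def FCV : Tm → Set ℕ
  | .var _ => ∅
  | .unit => ∅
  | .nil => ∅
  | .cons => ∅
  | .lrec => ∅
  | .lam t => FCV t
  | .app t s => FCV t ∪ FCV s
  | .catch t => {k | k + 1 ∈ FCV t}
  | .throw a t => insert a (FCV t)

/-- Boolean test whether continuation variable `k` occurs free. -/
def kfree (k : ℕ) : Tm → Bool
  | .var _ => false
  | .unit => false
  | .nil => false
  | .cons => false
  | .lrec => false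
  | .lam t => kfree k t
  | .app t s => kfree k t || kfree k s
  | .catch t => kfree (k + 1) t
  | .throw a t => a == k || kfree k t

/-- Lift a renaming under a binder. -/
def liftF (f : ℕ → ℕ) : ℕ → ℕ
  | 0 => 0
  | n + 1 => f n + 1

/-- Renaming of term variables. -/
def renameTm (f : ℕ → ℕ) : Tm → Tm
  | .var x => .var (f x)
  | .unit => .unit
  | .nil => .nil
  | .cons => .cons
  | .lrec => .lrec
  | .lam t => .lam (renameTm (liftF f) t)
  | .app t s => .app (renameTm f t) (renameTm f s)
  | .catch t => .catch (renameTm f t)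
  | .throw a t => .throw a (renameTm f t)

/-- Renaming of continuation variables. -/
def renameK (f : ℕ → ℕ) : Tm → Tm
  | .var x => .var x
  | .unit => .unit
  | .nil => .nil
  | .cons => .cons
  | .lrec => .lrec
  | .lam t => .lam (renameK f t)
  | .app t s => .app (renameK f t) (renameK f s)
  | .catch t => .catch (renameK (liftF f) t)
  | .throw a t => .throw (f a) (renameK f t)

/-- Lift a parallel term substitution under a `lam` binder. -/
def liftS (σ : ℕ → Tm) : ℕ → Tm
  | 0 => .var 0
  | n + 1 => renameTm Nat.succ (σ n)

/-- Capture-avoiding parallel substitution of term variables. -/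
def subst (σ : ℕ → Tm) : Tm → Tm
  | .var x => σ x
  | .unit => .unit
  | .nil => .nil
  | .cons => .cons
  | .lrec => .lrec
  | .lam t => .lam (subst (liftS σ) t)
  | .app t s => .app (subst σ t) (subst σ s)
  | .catch t => .catch (subst (fun n => renameK Nat.succ (σ n)) t)
  | .throw a t => .throw a (subst σ t)

/-- Capture-avoiding substitution `t[x := r]` of `r` for the term variable
bound at index 0. -/
def subst0 (t r : Tm) : Tm :=
  subst (fun n => match n with | 0 => r | n + 1 => .var n) t

/-- The typing judgment `Γ; Δ ⊢ t : ρ`.  `Γ` assigns types to term variables,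
`Δ` assigns (arrow-free) types to continuation variables. -/
inductive HasTy : List Ty → List Ty → Tm → Ty → Prop
  | var {Γ Δ x ρ} : Γ[x]? = some ρ → HasTy Γ Δ (.var x) ρ
  | unit {Γ Δ} : HasTy Γ Δ .unit .unit
  | nil {Γ Δ σ} : HasTy Γ Δ .nil (.list σ)
  | cons {Γ Δ σ} : HasTy Γ Δ .cons (.arrow σ (.arrow (.list σ) (.list σ)))
  | lrec {Γ Δ ρ σ} :
      HasTy Γ Δ .lrec
        (.arrow ρ (.arrow (.arrow σ (.arrow (.list σ) (.arrow ρ ρ))) (.arrow (.list σ) ρ)))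
  | lam {Γ Δ σ τ t} : HasTy (σ :: Γ) Δ t τ → HasTy Γ Δ (.lam t) (.arrow σ τ)
  | app {Γ Δ σ τ t s} : HasTy Γ Δ t (.arrow σ τ) → HasTy Γ Δ s σ → HasTy Γ Δ (.app t s) τ
  | catch {Γ Δ ψ t} : ψ.ArrowFree → HasTy Γ (ψ :: Δ) t ψ → HasTy Γ Δ (.catch t) ψ
  | throw {Γ Δ a ψ τ t} : Δ[a]? = some ψ → ψ.ArrowFree → HasTy Γ Δ t ψ →
      HasTy Γ Δ (.throw a t) τ

/-- One-step reduction of λ⟨catch⟩: the compatible closure of the basic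
reduction rules. -/
inductive Red : Tm → Tm → Prop
  | beta {t v} : IsValue v → Red (.app (.lam t) v) (subst0 t v)
  | throwAppL {a t s} : Red (.app (.throw a t) s) (.throw a t)
  | throwAppR {v a t} : IsValue v → Red (.app v (.throw a t)) (.throw a t)
  | throwThrow {b a t} : Red (.throw b (.throw a t)) (.throw a t)
  | catch1 {t} : Red (.catch (.throw 0 t)) (.catch t)
  | catch2 {b v} : IsValue v →
      Red (.catch (.throw (b + 1) (renameK Nat.succ v))) (.throw b v)
  | catch3 {v} : IsValue v → Red (.catch (renameK Nat.succ v)) v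
  | lrecNil {vr vs} : IsValue vr → IsValue vs →
      Red (.app (.app (.app .lrec vr) vs) .nil) vr
  | lrecCons {vr vs vh vt} : IsValue vr → IsValue vs → IsValue vh → IsValue vt →
      Red (.app (.app (.app .lrec vr) vs) (.app (.app .cons vh) vt))
          (.app (.app (.app vs vh) vt) (.app (.app (.app .lrec vr) vs) vt))
  | appL {t t' s} : Red t t' → Red (.app t s) (.app t' s)
  | appR {t s s'} : Red s s' → Red (.app t s) (.app t s')
  | lamC {t t'} : Red t t' → Red (.lam t) (.lam t')
  | catchC {t t'} : Red t t' → Red (.catch t) (.catch t')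
  | throwC {a t t'} : Red t t' → Red (.throw a t) (.throw a t')

/-- Compound contexts Ē ::= □ | Ē t | v Ē | throw α Ē. -/
inductive Ctx : Type
  | hole : Ctx
  | appL : Ctx → Tm → Ctx
  | appR : Tm → Ctx → Ctx
  | throw : ℕ → Ctx → Ctx

/-- Filling the hole of a compound context. -/
def Ctx.fill : Ctx → Tm → Tm
  | .hole, s => s
  | .appL E t, s => .app (E.fill s) t
  | .appR v E, s => .app v (E.fill s)
  | .throw a E, s => .throw a (E.fill s)

/-- Well-formedness of a compound context: the terms in `v Ē` positions must
be values. -/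
inductive Ctx.Ok : Ctx → Prop
  | hole : Ctx.Ok .hole
  | appL {E t} : Ctx.Ok E → Ctx.Ok (.appL E t)
  | appR {v E} : IsValue v → Ctx.Ok E → Ctx.Ok (.appR v E)
  | throw {a E} : Ctx.Ok E → Ctx.Ok (.throw a E)

/-- Parallel reduction `t ⇒ t'`. -/
inductive PRed : Tm → Tm → Prop
  | var (x) : PRed (.var x) (.var x)
  | unit : PRed .unit .unit
  | nil : PRed .nil .nil
  | cons : PRed .cons .cons
  | lrec : PRed .lrec .lrec
  | app {t t' r r'} : PRed t t' → PRed r r' → PRed (.app t r) (.app t' r')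
  | lam {t t'} : PRed t t' → PRed (.lam t) (.lam t')
  | catch {t t'} : PRed t t' → PRed (.catch t) (.catch t')
  | beta {t t' v r} : IsValue v → PRed t t' → PRed v r →
      PRed (.app (.lam t) v) (subst0 t' r)
  | throw {E a t t'} : Ctx.Ok E → PRed t t' →
      PRed (E.fill (.throw a t)) (.throw a t')
  | catch1 {t t'} : PRed t t' → PRed (.catch (.throw 0 t)) (.catch t')
  | catch2 {b v t} : IsValue v → PRed v t →
      PRed (.catch (.throw (b + 1) (renameK Nat.succ v))) (.throw b t)
  | catch3 {v t} : IsValue v → PRed v t → PRed (.catch (renameK Nat.succ v)) t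
  | lrecNil {vr vs r} : IsValue vr → IsValue vs → PRed vr r →
      PRed (.app (.app (.app .lrec vr) vs) .nil) r
  | lrecCons {vr vs vh vt r s h t} : IsValue vr → IsValue vs → IsValue vh → IsValue vt →
      PRed vr r → PRed vs s → PRed vh h → PRed vt t →
      PRed (.app (.app (.app .lrec vr) vs) (.app (.app .cons vh) vt))
           (.app (.app (.app s h) t) (.app (.app (.app .lrec r) s) t))

/-- Parallel reduction on compound contexts. -/
inductive CPred : Ctx → Ctx → Prop
  | hole : CPred .hole .hole
  | throwHole (a) : CPred (.throw a .hole) .hole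
  | appL {E F t t'} : CPred E F → PRed t t' → CPred (.appL E t) (.appL F t')
  | appR {v t E F} : IsValue v → CPred E F → PRed v t → CPred (.appR v E) (.appR t F)
  | throw {a E F} : CPred E F → CPred (.throw a E) (.throw a F)
  | throwThrow {b a E F} : CPred E F → CPred (.throw b (.throw a E)) (.throw a F)

/-- Size of a term. -/
def Tm.size : Tm → ℕ
  | .var _ => 1
  | .unit => 1
  | .nil => 1
  | .cons => 1
  | .lrec => 1
  | .lam t => t.size + 1
  | .app t s => t.size + s.size + 1
  | .catch t => t.size + 1
  | .throw _ t => t.size + 1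

theorem size_renameK (f : ℕ → ℕ) (t : Tm) : (renameK f t).size = t.size := by
  induction t generalizing f <;> simp [renameK, Tm.size, *]

/-- Does the term have the shape `throw a t`? -/
def isThrow : Tm → Bool
  | .throw _ _ => true
  | _ => false

/-- Does the term have the shape `Ē[throw a q]` for some compound context `Ē`? -/
def hasThrow : Tm → Bool
  | .throw _ _ => true
  | .app t s => hasThrow t || (isVal t && hasThrow s)
  | _ => false

/-- The complete development `t*` of a term `t`: all redexes of `t` are
contracted simultaneously. -/
def cd : Tm → Tm
  | .var x => .var x
  | .unit => .unit
  | .nil => .nil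
  | .cons => .cons
  | .lrec => .lrec
  | .lam t => .lam (cd t)
  | .throw a t => if isThrow t then cd t else .throw a (cd t)
  | .catch t =>
    match t with
    | .throw 0 q => .catch (cd q)
    | .throw (b + 1) u =>
        if isVal u && !kfree 0 u then .throw b (cd (renameK Nat.pred u))
        else .catch (cd (.throw (b + 1) u))
    | u =>
        if isVal u && !kfree 0 u then cd (renameK Nat.pred u)
        else .catch (cd u)
  | .app t s =>
    if hasThrow t then cd t
    else if isVal t && hasThrow s then cd s
    else match t, s with
      | .lam t', v => if isVal v then subst0 (cd t') (cd v) else .app (cd (.lam t')) (cd v)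
      | .app (.app .lrec vr) vs, .nil =>
          if isVal vr && isVal vs then cd vr
          else .app (cd (.app (.app .lrec vr) vs)) (cd .nil)
      | .app (.app .lrec vr) vs, .app (.app .cons vh) vt =>
          if isVal vr && isVal vs && isVal vh && isVal vt then
            .app (.app (.app (cd vs) (cd vh)) (cd vt))
                 (.app (.app (.app .lrec (cd vr)) (cd vs)) (cd vt))
          else .app (cd (.app (.app .lrec vr) vs)) (cd (.app (.app .cons vh) vt))
      | t, s => .app (cd t) (cd s)
  termination_by t => t.size
  decreasing_by all_goals (simp_all [Tm.size, size_renameK] <;> omega)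

/-- Strong normalization: every reduction sequence from `t` is finite. -/
def SN (t : Tm) : Prop := Acc (fun a b => Red b a) t

/-- The list interpretation `[S]` of a set of terms `S`. -/
inductive ListInt (S : Set Tm) : Tm → Prop
  | mk {t} :
      (∀ v w, IsValue v → IsValue w →
        Relation.ReflTransGen Red t (.app (.app .cons v) w) → v ∈ S) →
      (∀ v w, IsValue v → IsValue w →
        Relation.ReflTransGen Red t (.app (.app .cons v) w) → ListInt S w) →
      ListInt S t

/-- The reducibility interpretation `⟦σ⟧` of a type. -/
def interp : Ty → Set Tm
  | .unit => {t | SN t}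
  | .list σ => {t | SN t ∧ ListInt (interp σ) t}
  | .arrow σ τ => {t | ∀ s ∈ interp σ, Tm.app t s ∈ interp τ}

/-- A term is neutral if it is not of the shape `λx.r`, `lrec v_r v_s`, or
`cons v w`. -/
def Neutral (t : Tm) : Prop :=
  (∀ r, t ≠ .lam r) ∧
  (∀ vr vs, IsValue vr → IsValue vs → t ≠ .app (.app .lrec vr) vs) ∧
  (∀ v w, IsValue v → IsValue w → t ≠ .app (.app .cons v) w)

/-- Iterated application `t u₁ ⋯ uₙ`. -/
def appList (t : Tm) (us : List Tm) : Tm := us.foldl .app t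

/-- The term `cons w₁ (cons … (cons wₙ nil))`. -/
def listEnc : List Tm → Tm
  | [] => .nil
  | w :: ws => .app (.app .cons w) (listEnc ws)
/-! ### Auxiliary lemmas for the proof -/

lemma sn_of_red {t t' : Tm} (h : SN t) (r : Red t t') : SN t' := h.inv r

lemma sn_appL : ∀ {w : Tm}, SN w → ∀ {t s : Tm}, w = .app t s → SN t := by
  intro w h
  induction h with
  | intro w _ ih =>
    rintro t s rfl
    exact Acc.intro t (fun t' r => ih _ (Red.appL r) rfl)

lemma sn_throw_inv : ∀ {w : Tm}, SN w → ∀ {a : ℕ} {t : Tm}, w = .throw a t → SN t := by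
  intro w h
  induction h with
  | intro w _ ih =>
    rintro a t rfl
    exact Acc.intro t (fun t' r => ih _ (Red.throwC r) rfl)

lemma sn_throw {a : ℕ} {t : Tm} (h : SN t) : SN (.throw a t) := by
  induction h with
  | intro t ht ih =>
    constructor
    intro y r
    cases r with
    | throwThrow => exact Acc.intro _ ht
    | throwC r => exact ih _ r

/-- Safe terms: a variable applied to strongly normalizing arguments, possibly
with throws in head position. -/
inductive Safe : Tm → Prop
  | var (x) : Safe (.var x)
  | throw {a t} : SN t → Safe (.throw a t)
  | app {t u} : Safe t → SN u → Safe (.app t u)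

lemma safe_red : ∀ {t : Tm}, Safe t → ∀ {t' : Tm}, Red t t' → Safe t' := by
  intro t hs
  induction hs with
  | var x => intro t' r; cases r
  | throw hsn =>
    intro t' r
    cases r with
    | throwThrow => exact .throw (sn_throw_inv hsn rfl)
    | throwC r => exact .throw (sn_of_red hsn r)
  | app hst hu ih =>
    intro t' r
    cases r with
    | beta hv => cases hst
    | throwAppL => exact hst
    | throwAppR hv => exact .throw (sn_throw_inv hu rfl)
    | lrecNil h1 h2 =>
      cases hst with | app h _ => cases h with | app h2 _ => cases h2
    | lrecCons h1 h2 h3 h4 =>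
      cases hst with | app h _ => cases h with | app h2 _ => cases h2
    | appL r => exact .app (ih r) hu
    | appR r => exact .app hst (sn_of_red hu r)

lemma sn_app_safe : ∀ {t : Tm}, SN t → Safe t → ∀ {u : Tm}, SN u → SN (.app t u) := by
  intro t hsnt
  induction hsnt with
  | intro t ht iht =>
    intro hst u hsnu
    induction hsnu with
    | intro u hu ihu =>
      constructor
      intro y r
      cases r with
      | beta hv => cases hst
      | throwAppL => exact Acc.intro _ ht
      | throwAppR hv => exact Acc.intro _ hu
      | lrecNil h1 h2 =>
        cases hst with | app h _ => cases h with | app h2 _ => cases h2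
      | lrecCons h1 h2 h3 h4 =>
        cases hst with | app h _ => cases h with | app h2 _ => cases h2
      | appL r => exact iht _ r (safe_red hst r) (Acc.intro u hu)
      | appR r => exact ihu _ r

lemma safe_sn : ∀ {t : Tm}, Safe t → SN t := by
  intro t h
  induction h with
  | var x => exact Acc.intro _ (fun y r => by cases r)
  | throw hsn => exact sn_throw hsn
  | app hst hu ih => exact sn_app_safe ih hst hu

lemma safe_appList : ∀ (us : List Tm) {t : Tm}, Safe t → (∀ u ∈ us, SN u) →
    Safe (appList t us) := by
  intro us
  induction us with
  | nil => intro t ht _; exact ht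
  | cons u us ih =>
    intro t ht hus
    exact ih (.app ht (hus u (by simp))) (fun v hv => hus v (by simp [hv]))

lemma safe_reds {t s : Tm} (h : Safe t) (hr : Relation.ReflTransGen Red t s) :
    Safe s := by
  induction hr with
  | refl => exact h
  | tail _ r ih => exact safe_red ih r

lemma safe_no_cons {t : Tm} (h : Safe t) {v w : Tm}
    (hr : Relation.ReflTransGen Red t (.app (.app .cons v) w)) : False := by
  have := safe_reds h hr
  cases this with | app h1 _ => cases h1 with | app h2 _ => cases h2

lemma listInt_safe {S : Set Tm} {t : Tm} (h : Safe t) : ListInt S t :=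
  ⟨fun _ _ _ _ hr => absurd hr (fun hr => safe_no_cons h hr),
   fun _ _ _ _ hr => absurd hr (fun hr => safe_no_cons h hr)⟩

lemma appList_snoc (t s : Tm) (us : List Tm) :
    appList t (us ++ [s]) = .app (appList t us) s := by
  simp [appList, List.foldl_append]

/-- Reducible terms are strongly normalizing, and a variable applied to a
sequence of strongly normalizing terms is reducible at every type. -/
theorem interp_sn_and_var_app (σ : Ty) :
    interp σ ⊆ {t : Tm | SN t} ∧
    (∀ (x : ℕ) (us : List Tm), (∀ u ∈ us, SN u) →
      appList (Tm.var x) us ∈ interp σ) := by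
  induction σ with
  | unit =>
    refine ⟨fun t ht => ht, fun x us hus => ?_⟩
    exact safe_sn (safe_appList us (.var x) hus)
  | list σ ih =>
    refine ⟨fun t ht => ht.1, fun x us hus => ?_⟩
    have hs := safe_appList us (Safe.var x) hus
    exact ⟨safe_sn hs, listInt_safe hs⟩
  | arrow σ τ ihσ ihτ =>
    constructor
    · intro t ht
      have h0 : Tm.var 0 ∈ interp σ := by
        have := ihσ.2 0 [] (by simp)
        simpa [appList] using this
      have h1 : Tm.app t (.var 0) ∈ interp τ := ht _ h0
      exact sn_appL (ihτ.1 h1) rfl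
    · intro x us hus
      intro s hs
      have hsn : SN s := ihσ.1 hs
      have heq : Tm.app (appList (.var x) us) s = appList (.var x) (us ++ [s]) :=
        (appList_snoc _ _ _).symm
      rw [heq]
      refine ihτ.2 x (us ++ [s]) ?_
      intro u hu
      rcases List.mem_append.1 hu with h | h
      · exact hus u h
      · simp at h; subst h; exact hsn
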